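/- For all natural numbers k ≥ 1 and q ≥ 1 with n = k + q, the subspaces H^{⊙[k+1],∧[q−1]} and H^{⊙[k−1],∧[q+1]} of H^{⊗n} have trivial intersection: H^{⊙[k+1],∧[q−1]} ∩ H^{⊙[k−1],∧[q+1]} = {0}. -/

import Mathlib

open scoped BigOperators
set_option linter.unusedSectionVars false
set_option maxHeartbeats 1000000

noncomputable section

variable (F : Type*) [Field F] [CharZero F] (H : Type*) [AddCommGroup H] [Module F H]

/-- The `n`-th tensor power of `H` over `F`. -/
abbrev TP (n : ℕ) : Type _ := PiTensorProduct F (fun _ : Fin n => H)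

/-- The action of a permutation `σ ∈ S_n` on the `n`-th tensor power,
permuting the tensor factors. -/
def permMap (n : ℕ) (σ : Equiv.Perm (Fin n)) : TP F H n →ₗ[F] TP F H n :=
  (PiTensorProduct.reindex F (fun _ : Fin n => H) σ).toLinearMap

/-- Identification of tensor powers of equal degrees. -/
def tpCast {m m' : ℕ} (hm : m = m') : TP F H m →ₗ[F] TP F H m' :=
  (PiTensorProduct.reindex F (fun _ : Fin m => H) (finCongr hm)).toLinearMap

/-- The permutations of `{1, …, n}` moving only positions in `a`. -/
def permsOn (n : ℕ) (a : Finset (Fin n)) : Finset (Equiv.Perm (Fin n)) :=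
  Finset.univ.filter fun σ => ∀ i, i ∉ a → σ i = i

/-- `S_a`: symmetrisation over the positions in `a` (the average over all
permutations of the positions in `a`, fixing the other positions). -/
def symOn (n : ℕ) (a : Finset (Fin n)) : TP F H n →ₗ[F] TP F H n :=
  (a.card.factorial : F)⁻¹ • ∑ σ ∈ permsOn n a, permMap F H n σ

/-- `A_a`: skew-symmetrisation over the positions in `a` (the signed average over
all permutations of the positions in `a`, fixing the other positions). -/
def altOn (n : ℕ) (a : Finset (Fin n)) : TP F H n →ₗ[F] TP F H n :=
  (a.card.factorial : F)⁻¹ • ∑ σ ∈ permsOn n a, (Equiv.Perm.sign σ : ℤ) • permMap F H n σ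

/-- The first `k` positions of `{1, …, n}`. -/
def firstSet (n k : ℕ) : Finset (Fin n) := Finset.univ.filter fun i => (i : ℕ) < k

/-- The last `m` positions of `{1, …, n}`. -/
def lastSet (n m : ℕ) : Finset (Fin n) := Finset.univ.filter fun i => n - m ≤ (i : ℕ)

/-- `H^{⊙a,∧aᶜ}`: the image of `S_a ∘ A_{aᶜ}`, the subspace of `n`-tensors symmetric in
the positions of `a` and skew-symmetric in the positions of `aᶜ`. -/
def Hgen (n : ℕ) (a : Finset (Fin n)) : Submodule F (TP F H n) :=
  LinearMap.range (symOn F H n a ∘ₗ altOn F H n aᶜ)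

/-- `H_{k,n-k} = H^{⊙k} ⊗ H^{∧(n-k)}`: the subspace of `n`-tensors symmetric in the
first `k` positions and skew-symmetric in the remaining positions. -/
def Hmix (n k : ℕ) : Submodule F (TP F H n) := Hgen F H n (firstSet n k)

/-- `H^{⊙[k],∧[n-k]}`: the span of the subspaces `H^{⊙a,∧aᶜ}` over all `k`-element
subsets `a ⊆ {1, …, n}`. -/
def HmixSpan (n k : ℕ) : Submodule F (TP F H n) :=
  ⨆ a ∈ {a : Finset (Fin n) | a.card = k}, Hgen F H n a

/-- The global operator whose restriction to `H_{k,q}` (with `m = q + 1`, `n = k + q`)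
is `d̆_q`: skew-symmetrisation of the last `m` positions, scaled by `m`. -/
def dOp (n m : ℕ) : TP F H n →ₗ[F] TP F H n := (m : F) • altOn F H n (lastSet n m)

/-- The global operator whose restriction to `H_{k-1,q+1}` (with `m = k`, `n = k + q`)
is `d̆*_q`: symmetrisation of the first `m` positions, scaled by `m`. -/
def dStarOp (n m : ℕ) : TP F H n →ₗ[F] TP F H n := (m : F) • symOn F H n (firstSet n m)

/-- The elementary element `h₁⊙…⊙h_k ⊗ x₁∧…∧x_q` of `H_{k,q} ⊆ H^{⊗(k+q)}`. -/
def elem (k q : ℕ) (h : Fin k → H) (x : Fin q → H) : TP F H (k + q) :=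
  ∑ ρ : Equiv.Perm (Fin k), ∑ τ : Equiv.Perm (Fin q),
    (Equiv.Perm.sign τ : ℤ) •
      (PiTensorProduct.tprod F (Fin.append (h ∘ ρ) (x ∘ τ)) : TP F H (k + q))

-- new material

lemma permMap_mul {n : ℕ} (σ τ : Equiv.Perm (Fin n)) :
    permMap F H n (σ * τ) = permMap F H n σ * permMap F H n τ := by
  have h : (σ * τ : Equiv.Perm (Fin n)) = (τ : Fin n ≃ Fin n).trans σ := rfl
  rw [permMap, h, ← PiTensorProduct.reindex_trans τ σ]
  rfl

lemma permMap_one {n : ℕ} : permMap F H n 1 = 1 := by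
  have h : (1 : Equiv.Perm (Fin n)) = Equiv.refl (Fin n) := rfl
  rw [permMap, h, PiTensorProduct.reindex_refl]
  rfl

def sgnF {n : ℕ} (σ : Equiv.Perm (Fin n)) : F := ((Equiv.Perm.sign σ : ℤ) : F)

lemma sgnF_mul {n : ℕ} (σ τ : Equiv.Perm (Fin n)) : sgnF F (σ * τ) = sgnF F σ * sgnF F τ := by
  simp [sgnF]

lemma sgnF_mul_self {n : ℕ} (σ : Equiv.Perm (Fin n)) : sgnF F σ * sgnF F σ = 1 := by
  rcases Int.units_eq_one_or (Equiv.Perm.sign σ) with h | h <;> simp [sgnF, h]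

lemma sgnF_inv {n : ℕ} (σ : Equiv.Perm (Fin n)) : sgnF F σ⁻¹ = sgnF F σ := by
  simp [sgnF]

lemma sgnF_swap {n : ℕ} {i j : Fin n} (h : i ≠ j) : sgnF F (Equiv.swap i j) = -1 := by
  simp [sgnF, Equiv.Perm.sign_swap h]

section PermsOn

variable {n : ℕ} {a : Finset (Fin n)}

lemma mem_permsOn {σ : Equiv.Perm (Fin n)} :
    σ ∈ permsOn n a ↔ ∀ i, i ∉ a → σ i = i := by
  simp [permsOn]

lemma one_mem_permsOn : (1 : Equiv.Perm (Fin n)) ∈ permsOn n a :=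
  mem_permsOn.2 fun _ _ => rfl

lemma mul_mem_permsOn {σ τ : Equiv.Perm (Fin n)} (hσ : σ ∈ permsOn n a)
    (hτ : τ ∈ permsOn n a) : σ * τ ∈ permsOn n a := by
  rw [mem_permsOn] at *
  intro i hi
  simp [Equiv.Perm.mul_apply, hτ i hi, hσ i hi]

lemma inv_mem_permsOn {σ : Equiv.Perm (Fin n)} (hσ : σ ∈ permsOn n a) :
    σ⁻¹ ∈ permsOn n a := by
  rw [mem_permsOn] at *
  intro i hi
  have := hσ i hi
  conv_lhs => rw [← this]
  simp

lemma permsOn_maps {σ : Equiv.Perm (Fin n)} (hσ : σ ∈ permsOn n a) {i : Fin n}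
    (hi : i ∈ a) : σ i ∈ a := by
  by_contra hmem
  have h1 := mem_permsOn.1 (inv_mem_permsOn hσ) _ hmem
  have h2 : σ i = i := by
    have := congrArg σ h1
    simpa using this.symm
  rw [h2] at hmem
  exact hmem hi

lemma swap_mem_permsOn {i j : Fin n} (hi : i ∈ a) (hj : j ∈ a) :
    Equiv.swap i j ∈ permsOn n a := by
  rw [mem_permsOn]
  intro x hx
  exact Equiv.swap_apply_of_ne_of_ne (by rintro rfl; exact hx hi) (by rintro rfl; exact hx hj)

lemma permsOn_disjoint_comm {σ τ : Equiv.Perm (Fin n)} (hσ : σ ∈ permsOn n a)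
    (hτ : τ ∈ permsOn n aᶜ) : σ * τ = τ * σ := by
  ext x
  by_cases hx : x ∈ a
  · have hτx : τ x = x := mem_permsOn.1 hτ x (by simpa using hx)
    have hσx : σ x ∈ a := permsOn_maps hσ hx
    simp [Equiv.Perm.mul_apply, hτx, mem_permsOn.1 hτ _ (by simpa using hσx)]
  · have hσx : σ x = x := mem_permsOn.1 hσ x hx
    have hτx : τ x ∈ aᶜ := permsOn_maps hτ (by simpa using hx)
    simp [Equiv.Perm.mul_apply, hσx, mem_permsOn.1 hσ _ (by simpa using hτx)]

lemma card_permsOn : (permsOn n a).card = a.card.factorial := by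
  have h1 : (permsOn n a).card
      = Fintype.card {σ : Equiv.Perm (Fin n) // ∀ i, ¬ i ∈ a → σ i = i} := by
    rw [Fintype.card_subtype]
    rfl
  rw [h1, ← Fintype.card_congr (Equiv.Perm.subtypeEquivSubtypePerm (fun i => i ∈ a)),
    Fintype.card_perm, Fintype.card_coe]

lemma sum_permsOn_mul_right {β : Type*} [AddCommMonoid β] {t : Equiv.Perm (Fin n)}
    (ht : t ∈ permsOn n a) (f : Equiv.Perm (Fin n) → β) :
    ∑ σ ∈ permsOn n a, f (σ * t) = ∑ σ ∈ permsOn n a, f σ := by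
  refine Finset.sum_nbij' (fun σ => σ * t) (fun σ => σ * t⁻¹) ?_ ?_ ?_ ?_ ?_
  · exact fun σ hσ => mul_mem_permsOn hσ ht
  · exact fun σ hσ => mul_mem_permsOn hσ (inv_mem_permsOn ht)
  · intro σ _; group
  · intro σ _; group
  · intro σ _; rfl

lemma sum_permsOn_mul_left {β : Type*} [AddCommMonoid β] {t : Equiv.Perm (Fin n)}
    (ht : t ∈ permsOn n a) (f : Equiv.Perm (Fin n) → β) :
    ∑ σ ∈ permsOn n a, f (t * σ) = ∑ σ ∈ permsOn n a, f σ := by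
  refine Finset.sum_nbij' (fun σ => t * σ) (fun σ => t⁻¹ * σ) ?_ ?_ ?_ ?_ ?_
  · exact fun σ hσ => mul_mem_permsOn ht hσ
  · exact fun σ hσ => mul_mem_permsOn (inv_mem_permsOn ht) hσ
  · intro σ _; group
  · intro σ _; group
  · intro σ _; rfl

end PermsOn
section Ops

variable {n : ℕ} {a : Finset (Fin n)}

lemma altOn_def' (n : ℕ) (a : Finset (Fin n)) :
    altOn F H n a
      = (a.card.factorial : F)⁻¹ • ∑ σ ∈ permsOn n a, sgnF F σ • permMap F H n σ := by
  rw [altOn]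
  congr 1

lemma symOn_mul_permMap {t : Equiv.Perm (Fin n)} (ht : t ∈ permsOn n a) :
    symOn F H n a * permMap F H n t = symOn F H n a := by
  rw [symOn, smul_mul_assoc, Finset.sum_mul]
  congr 1
  calc ∑ σ ∈ permsOn n a, permMap F H n σ * permMap F H n t
      = ∑ σ ∈ permsOn n a, permMap F H n (σ * t) :=
        Finset.sum_congr rfl fun σ _ => (permMap_mul F H σ t).symm
    _ = ∑ σ ∈ permsOn n a, permMap F H n σ := sum_permsOn_mul_right ht _

lemma permMap_mul_symOn {t : Equiv.Perm (Fin n)} (ht : t ∈ permsOn n a) :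
    permMap F H n t * symOn F H n a = symOn F H n a := by
  rw [symOn, mul_smul_comm, Finset.mul_sum]
  congr 1
  calc ∑ σ ∈ permsOn n a, permMap F H n t * permMap F H n σ
      = ∑ σ ∈ permsOn n a, permMap F H n (t * σ) :=
        Finset.sum_congr rfl fun σ _ => (permMap_mul F H t σ).symm
    _ = ∑ σ ∈ permsOn n a, permMap F H n σ := sum_permsOn_mul_left ht _

lemma altOn_mul_permMap {t : Equiv.Perm (Fin n)} (ht : t ∈ permsOn n a) :
    altOn F H n a * permMap F H n t = sgnF F t • altOn F H n a := by
  rw [altOn_def', smul_mul_assoc, Finset.sum_mul, smul_comm]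
  congr 1
  calc ∑ σ ∈ permsOn n a, (sgnF F σ • permMap F H n σ) * permMap F H n t
      = ∑ σ ∈ permsOn n a, (fun ρ => (sgnF F t * sgnF F ρ) • permMap F H n ρ) (σ * t) := by
        refine Finset.sum_congr rfl fun σ _ => ?_
        rw [smul_mul_assoc, ← permMap_mul]
        simp only []
        congr 1
        rw [sgnF_mul, mul_comm (sgnF F σ) (sgnF F t), ← mul_assoc, sgnF_mul_self, one_mul]
    _ = ∑ ρ ∈ permsOn n a, (sgnF F t * sgnF F ρ) • permMap F H n ρ :=
        sum_permsOn_mul_right ht (fun ρ => (sgnF F t * sgnF F ρ) • permMap F H n ρ)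
    _ = sgnF F t • ∑ σ ∈ permsOn n a, sgnF F σ • permMap F H n σ := by
        rw [Finset.smul_sum]
        exact Finset.sum_congr rfl fun ρ _ => (mul_smul _ _ _)

lemma permMap_mul_altOn {t : Equiv.Perm (Fin n)} (ht : t ∈ permsOn n a) :
    permMap F H n t * altOn F H n a = sgnF F t • altOn F H n a := by
  rw [altOn_def', mul_smul_comm, Finset.mul_sum, smul_comm]
  congr 1
  calc ∑ σ ∈ permsOn n a, permMap F H n t * (sgnF F σ • permMap F H n σ)
      = ∑ σ ∈ permsOn n a, (fun ρ => (sgnF F t * sgnF F ρ) • permMap F H n ρ) (t * σ) := by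
        refine Finset.sum_congr rfl fun σ _ => ?_
        rw [mul_smul_comm, ← permMap_mul]
        simp only []
        congr 1
        rw [sgnF_mul, ← mul_assoc, sgnF_mul_self, one_mul]
    _ = ∑ ρ ∈ permsOn n a, (sgnF F t * sgnF F ρ) • permMap F H n ρ :=
        sum_permsOn_mul_left ht (fun ρ => (sgnF F t * sgnF F ρ) • permMap F H n ρ)
    _ = sgnF F t • ∑ σ ∈ permsOn n a, sgnF F σ • permMap F H n σ := by
        rw [Finset.smul_sum]
        exact Finset.sum_congr rfl fun ρ _ => (mul_smul _ _ _)

lemma symOn_idem : symOn F H n a * symOn F H n a = symOn F H n a := by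
  nth_rewrite 1 [symOn]
  rw [smul_mul_assoc, Finset.sum_mul]
  have h1 : ∑ σ ∈ permsOn n a, permMap F H n σ * symOn F H n a
      = ∑ σ ∈ permsOn n a, symOn F H n a :=
    Finset.sum_congr rfl fun σ hσ => permMap_mul_symOn F H hσ
  rw [h1, Finset.sum_const, card_permsOn, ← Nat.cast_smul_eq_nsmul F, smul_smul,
    inv_mul_cancel₀ (by exact_mod_cast a.card.factorial_ne_zero), one_smul]

lemma altOn_idem : altOn F H n a * altOn F H n a = altOn F H n a := by
  nth_rewrite 1 [altOn_def']
  rw [smul_mul_assoc, Finset.sum_mul]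
  have h1 : ∑ σ ∈ permsOn n a, (sgnF F σ • permMap F H n σ) * altOn F H n a
      = ∑ σ ∈ permsOn n a, altOn F H n a := by
    refine Finset.sum_congr rfl fun σ hσ => ?_
    rw [smul_mul_assoc, permMap_mul_altOn F H hσ, smul_smul, sgnF_mul_self, one_smul]
  rw [h1, Finset.sum_const, card_permsOn, ← Nat.cast_smul_eq_nsmul F, smul_smul,
    inv_mul_cancel₀ (by exact_mod_cast a.card.factorial_ne_zero), one_smul]

lemma permMap_comm_altOn_compl {σ : Equiv.Perm (Fin n)} (hσ : σ ∈ permsOn n a) :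
    permMap F H n σ * altOn F H n aᶜ = altOn F H n aᶜ * permMap F H n σ := by
  rw [altOn_def', mul_smul_comm, smul_mul_assoc, Finset.mul_sum, Finset.sum_mul]
  congr 1
  refine Finset.sum_congr rfl fun τ hτ => ?_
  rw [mul_smul_comm, smul_mul_assoc, ← permMap_mul, ← permMap_mul,
    permsOn_disjoint_comm hσ hτ]

lemma permMap_comm_symOn_compl {t : Equiv.Perm (Fin n)} (ht : t ∈ permsOn n aᶜ) :
    permMap F H n t * symOn F H n a = symOn F H n a * permMap F H n t := by
  rw [symOn, mul_smul_comm, smul_mul_assoc, Finset.mul_sum, Finset.sum_mul]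
  congr 1
  refine Finset.sum_congr rfl fun σ hσ => ?_
  rw [← permMap_mul, ← permMap_mul, permsOn_disjoint_comm hσ ht]

lemma symOn_mul_altOn_comm :
    symOn F H n a * altOn F H n aᶜ = altOn F H n aᶜ * symOn F H n a := by
  conv_lhs => rw [symOn]
  conv_rhs => rw [symOn]
  rw [smul_mul_assoc, mul_smul_comm, Finset.sum_mul, Finset.mul_sum]
  congr 1
  exact Finset.sum_congr rfl fun σ hσ => permMap_comm_altOn_compl F H hσ

def eOp (n : ℕ) (a : Finset (Fin n)) : Module.End F (TP F H n) :=
  symOn F H n a * altOn F H n aᶜ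

lemma eOp_idem : eOp F H n a * eOp F H n a = eOp F H n a := by
  rw [eOp, mul_assoc, ← mul_assoc (altOn F H n aᶜ), ← symOn_mul_altOn_comm,
    mul_assoc (symOn F H n a), altOn_idem, ← mul_assoc, symOn_idem]

lemma eOp_mul_permsOn_a {t : Equiv.Perm (Fin n)} (ht : t ∈ permsOn n a) :
    eOp F H n a * permMap F H n t = eOp F H n a := by
  rw [eOp, mul_assoc, ← permMap_comm_altOn_compl F H ht, ← mul_assoc,
    symOn_mul_permMap F H ht]

lemma eOp_mul_permsOn_c {t : Equiv.Perm (Fin n)} (ht : t ∈ permsOn n aᶜ) :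
    eOp F H n a * permMap F H n t = sgnF F t • eOp F H n a := by
  rw [eOp, mul_assoc, altOn_mul_permMap F H ht, mul_smul_comm]

lemma permsOn_a_mul_eOp {t : Equiv.Perm (Fin n)} (ht : t ∈ permsOn n a) :
    permMap F H n t * eOp F H n a = eOp F H n a := by
  rw [eOp, ← mul_assoc, permMap_mul_symOn F H ht]

lemma permsOn_c_mul_eOp {t : Equiv.Perm (Fin n)} (ht : t ∈ permsOn n aᶜ) :
    permMap F H n t * eOp F H n a = sgnF F t • eOp F H n a := by
  rw [eOp, ← mul_assoc, permMap_comm_symOn_compl F H ht, mul_assoc,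
    permMap_mul_altOn F H ht, mul_smul_comm]

lemma End_neg_mul {X Y : Module.End F (TP F H n)} : -X * Y = -(X * Y) :=
  neg_mul X Y

lemma End_smul_mul {c : F} {X Y : Module.End F (TP F H n)} : c • X * Y = c • (X * Y) :=
  smul_mul_assoc c X Y

lemma End_mul_smul {c : F} {X Y : Module.End F (TP F H n)} : X * (c • Y) = c • (X * Y) :=
  mul_smul_comm c X Y

lemma eOp_mul_swap_c {j j' : Fin n} (hj : j ∈ aᶜ) (hj' : j' ∈ aᶜ) (hjj' : j ≠ j') :
    eOp F H n a * permMap F H n (Equiv.swap j j') = -eOp F H n a := by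
  rw [eOp_mul_permsOn_c F H (swap_mem_permsOn hj hj'), sgnF_swap F hjj']
  exact neg_one_smul F (eOp F H n a)

lemma swap_c_mul_eOp {j j' : Fin n} (hj : j ∈ aᶜ) (hj' : j' ∈ aᶜ) (hjj' : j ≠ j') :
    permMap F H n (Equiv.swap j j') * eOp F H n a = -eOp F H n a := by
  rw [permsOn_c_mul_eOp F H (swap_mem_permsOn hj hj'), sgnF_swap F hjj']
  exact neg_one_smul F (eOp F H n a)

end Ops
section SwapIds

variable {α : Type*} [DecidableEq α]

lemma swap_id1 {i j j' : α} (hij : i ≠ j) (hij' : i ≠ j') (hjj' : j ≠ j') :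
    Equiv.swap i j * Equiv.swap i j' = Equiv.swap j j' * Equiv.swap i j := by
  ext x
  simp only [Equiv.Perm.mul_apply, Equiv.swap_apply_def]
  split_ifs <;> simp_all

lemma swap_id2 {i i' j : α} (hij : i ≠ j) (hi'j : i' ≠ j) (hii' : i ≠ i') :
    Equiv.swap i j * Equiv.swap i' j = Equiv.swap i i' * Equiv.swap i j := by
  ext x
  simp only [Equiv.Perm.mul_apply, Equiv.swap_apply_def]
  split_ifs <;> simp_all

lemma swap_id3 {i i' j j' : α} (hii' : i ≠ i') (hjj' : j ≠ j') (hij : i ≠ j)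
    (hij' : i ≠ j') (hi'j : i' ≠ j) (hi'j' : i' ≠ j') :
    Equiv.swap j j' * (Equiv.swap i j * Equiv.swap i' j') * Equiv.swap i i'
      = Equiv.swap i j * Equiv.swap i' j' := by
  ext x
  simp only [Equiv.Perm.mul_apply, Equiv.swap_apply_def]
  split_ifs <;> simp_all

end SwapIds

section YT

variable {n : ℕ} {a : Finset (Fin n)}

def Yop (n : ℕ) (a : Finset (Fin n)) : Module.End F (TP F H n) :=
  ∑ i ∈ a, ∑ j ∈ aᶜ, permMap F H n (Equiv.swap i j)

def Cop (n : ℕ) : Module.End F (TP F H n) :=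
  ∑ i : Fin n, ∑ j : Fin n, permMap F H n (Equiv.swap i j)

lemma Cop_comm (σ : Equiv.Perm (Fin n)) :
    permMap F H n σ * Cop F H n = Cop F H n * permMap F H n σ := by
  rw [Cop, Finset.mul_sum, Finset.sum_mul]
  have h1 : ∀ i : Fin n, permMap F H n σ * ∑ j : Fin n, permMap F H n (Equiv.swap i j)
      = ∑ j : Fin n, permMap F H n (Equiv.swap (σ i) (σ j)) * permMap F H n σ := by
    intro i
    rw [Finset.mul_sum]
    refine Finset.sum_congr rfl fun j _ => ?_
    rw [← permMap_mul, Equiv.mul_swap_eq_swap_mul, permMap_mul]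
  calc ∑ i : Fin n, permMap F H n σ * ∑ j : Fin n, permMap F H n (Equiv.swap i j)
      = ∑ i : Fin n, ∑ j : Fin n, permMap F H n (Equiv.swap (σ i) (σ j)) * permMap F H n σ :=
        Finset.sum_congr rfl fun i _ => h1 i
    _ = ∑ i : Fin n, ∑ j : Fin n, permMap F H n (Equiv.swap (σ i) j) * permMap F H n σ :=
        Finset.sum_congr rfl fun i _ =>
          Equiv.sum_comp σ (fun j => permMap F H n (Equiv.swap (σ i) j) * permMap F H n σ)
    _ = ∑ i : Fin n, ∑ j : Fin n, permMap F H n (Equiv.swap i j) * permMap F H n σ :=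
        Equiv.sum_comp σ (fun i => ∑ j : Fin n, permMap F H n (Equiv.swap i j) * permMap F H n σ)
    _ = ∑ i : Fin n, (∑ j : Fin n, permMap F H n (Equiv.swap i j)) * permMap F H n σ :=
        Finset.sum_congr rfl fun i _ => (Finset.sum_mul _ _ _).symm

lemma Cop_comm_symOn (b : Finset (Fin n)) :
    Cop F H n * symOn F H n b = symOn F H n b * Cop F H n := by
  rw [symOn, mul_smul_comm, smul_mul_assoc, Finset.mul_sum, Finset.sum_mul]
  congr 1
  exact Finset.sum_congr rfl fun σ _ => (Cop_comm F H σ).symm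

lemma Cop_comm_altOn (b : Finset (Fin n)) :
    Cop F H n * altOn F H n b = altOn F H n b * Cop F H n := by
  rw [altOn_def', mul_smul_comm, smul_mul_assoc, Finset.mul_sum, Finset.sum_mul]
  congr 1
  refine Finset.sum_congr rfl fun σ _ => ?_
  rw [mul_smul_comm, smul_mul_assoc, Cop_comm F H σ]

lemma Cop_comm_eOp : Cop F H n * eOp F H n a = eOp F H n a * Cop F H n := by
  rw [eOp, ← mul_assoc, Cop_comm_symOn, mul_assoc, Cop_comm_altOn, ← mul_assoc]

lemma Cop_comm_Yop : Cop F H n * Yop F H n a = Yop F H n a * Cop F H n := by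
  rw [Yop, Finset.mul_sum, Finset.sum_mul]
  refine Finset.sum_congr rfl fun i _ => ?_
  rw [Finset.mul_sum, Finset.sum_mul]
  exact Finset.sum_congr rfl fun j _ => (Cop_comm F H _).symm

lemma Yop_comm_permsOn_a {σ : Equiv.Perm (Fin n)} (hσ : σ ∈ permsOn n a) :
    permMap F H n σ * Yop F H n a = Yop F H n a * permMap F H n σ := by
  rw [Yop, Finset.mul_sum, Finset.sum_mul]
  calc ∑ i ∈ a, permMap F H n σ * ∑ j ∈ aᶜ, permMap F H n (Equiv.swap i j)
      = ∑ i ∈ a, ∑ j ∈ aᶜ, permMap F H n (Equiv.swap (σ i) j) * permMap F H n σ := by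
        refine Finset.sum_congr rfl fun i _ => ?_
        rw [Finset.mul_sum]
        refine Finset.sum_congr rfl fun j hj => ?_
        have hσj : σ j = j := mem_permsOn.1 hσ j (Finset.mem_compl.1 hj)
        rw [← permMap_mul, Equiv.mul_swap_eq_swap_mul, hσj, permMap_mul]
    _ = ∑ i ∈ a, ∑ j ∈ aᶜ, permMap F H n (Equiv.swap i j) * permMap F H n σ := by
        refine Finset.sum_nbij' (fun i => σ i) (fun i => σ⁻¹ i) ?_ ?_ ?_ ?_ ?_
        · exact fun i hi => permsOn_maps hσ hi
        · exact fun i hi => permsOn_maps (inv_mem_permsOn hσ) hi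
        · intro i _; simp
        · intro i _; simp
        · intro i _; rfl
    _ = ∑ i ∈ a, (∑ j ∈ aᶜ, permMap F H n (Equiv.swap i j)) * permMap F H n σ :=
        Finset.sum_congr rfl fun i _ => (Finset.sum_mul _ _ _).symm

lemma Yop_comm_permsOn_c {σ : Equiv.Perm (Fin n)} (hσ : σ ∈ permsOn n aᶜ) :
    permMap F H n σ * Yop F H n a = Yop F H n a * permMap F H n σ := by
  rw [Yop, Finset.mul_sum, Finset.sum_mul]
  refine Finset.sum_congr rfl fun i hi => ?_
  have hσi : σ i = i := mem_permsOn.1 hσ i (by simp [hi])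
  rw [Finset.mul_sum, Finset.sum_mul]
  calc ∑ j ∈ aᶜ, permMap F H n σ * permMap F H n (Equiv.swap i j)
      = ∑ j ∈ aᶜ, permMap F H n (Equiv.swap i (σ j)) * permMap F H n σ := by
        refine Finset.sum_congr rfl fun j hj => ?_
        rw [← permMap_mul, Equiv.mul_swap_eq_swap_mul, hσi, permMap_mul]
    _ = ∑ j ∈ aᶜ, permMap F H n (Equiv.swap i j) * permMap F H n σ := by
        refine Finset.sum_nbij' (fun j => σ j) (fun j => σ⁻¹ j) ?_ ?_ ?_ ?_ ?_
        · exact fun j hj => permsOn_maps hσ hj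
        · exact fun j hj => permsOn_maps (inv_mem_permsOn hσ) hj
        · intro j _; simp
        · intro j _; simp
        · intro j _; rfl

lemma Yop_comm_symOn : Yop F H n a * symOn F H n a = symOn F H n a * Yop F H n a := by
  rw [symOn, mul_smul_comm, smul_mul_assoc, Finset.mul_sum, Finset.sum_mul]
  congr 1
  exact Finset.sum_congr rfl fun σ hσ => (Yop_comm_permsOn_a F H hσ).symm

lemma Yop_comm_altOn : Yop F H n a * altOn F H n aᶜ = altOn F H n aᶜ * Yop F H n a := by
  rw [altOn_def', mul_smul_comm, smul_mul_assoc, Finset.mul_sum, Finset.sum_mul]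
  congr 1
  refine Finset.sum_congr rfl fun σ hσ => ?_
  rw [mul_smul_comm, smul_mul_assoc, Yop_comm_permsOn_c F H hσ]

lemma Yop_comm_eOp : Yop F H n a * eOp F H n a = eOp F H n a * Yop F H n a := by
  rw [eOp, ← mul_assoc, Yop_comm_symOn, mul_assoc, Yop_comm_altOn, ← mul_assoc]

end YT
section Main

variable {n : ℕ} {a : Finset (Fin n)}

lemma ne_of_mem_compl {i j : Fin n} (hi : i ∈ a) (hj : j ∈ aᶜ) : i ≠ j := by
  rintro rfl
  exact (Finset.mem_compl.1 hj) hi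

lemma term1 {i : Fin n} {j : Fin n} (_ : i ∈ a) (_ : j ∈ aᶜ) :
    eOp F H n a * permMap F H n (Equiv.swap i j * Equiv.swap i j) * eOp F H n a
      = eOp F H n a := by
  rw [Equiv.swap_mul_self, permMap_one, mul_one, eOp_idem]

lemma term2 {i j j' : Fin n} (hi : i ∈ a) (hj : j ∈ aᶜ) (hj' : j' ∈ aᶜ) (hjj' : j ≠ j') :
    eOp F H n a * permMap F H n (Equiv.swap i j * Equiv.swap i j') * eOp F H n a
      = -(eOp F H n a * permMap F H n (Equiv.swap i j) * eOp F H n a) := by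
  rw [swap_id1 (ne_of_mem_compl hi hj) (ne_of_mem_compl hi hj') hjj', permMap_mul,
    ← mul_assoc, eOp_mul_swap_c F H hj hj' hjj', End_neg_mul F H, End_neg_mul F H]

lemma term3 {i i' j : Fin n} (hi : i ∈ a) (hi' : i' ∈ a) (hj : j ∈ aᶜ) (hii' : i ≠ i') :
    eOp F H n a * permMap F H n (Equiv.swap i j * Equiv.swap i' j) * eOp F H n a
      = eOp F H n a * permMap F H n (Equiv.swap i j) * eOp F H n a := by
  rw [swap_id2 (ne_of_mem_compl hi hj) (ne_of_mem_compl hi' hj) hii', permMap_mul,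
    ← mul_assoc, eOp_mul_permsOn_a F H (swap_mem_permsOn hi hi')]

lemma term4 {i i' j j' : Fin n} (hi : i ∈ a) (hi' : i' ∈ a) (hj : j ∈ aᶜ) (hj' : j' ∈ aᶜ)
    (hii' : i ≠ i') (hjj' : j ≠ j') :
    eOp F H n a * permMap F H n (Equiv.swap i j * Equiv.swap i' j') * eOp F H n a = 0 := by
  have hkey : eOp F H n a * permMap F H n (Equiv.swap i j * Equiv.swap i' j') * eOp F H n a
      = -(eOp F H n a * permMap F H n (Equiv.swap i j * Equiv.swap i' j') * eOp F H n a) := by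
    conv_lhs => rw [← swap_id3 hii' hjj' (ne_of_mem_compl hi hj) (ne_of_mem_compl hi hj')
      (ne_of_mem_compl hi' hj) (ne_of_mem_compl hi' hj'), permMap_mul, permMap_mul,
      ← mul_assoc (eOp F H n a), ← mul_assoc (eOp F H n a),
      eOp_mul_swap_c F H hj hj' hjj']
    rw [End_neg_mul F H, End_neg_mul F H, End_neg_mul F H, mul_assoc,
      permsOn_a_mul_eOp F H (swap_mem_permsOn hi hi')]
  have h2 : (2 : F) • (eOp F H n a * permMap F H n (Equiv.swap i j * Equiv.swap i' j')
      * eOp F H n a) = 0 := by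
    rw [two_smul]
    nth_rewrite 2 [hkey]
    rw [add_neg_cancel]
  exact (smul_eq_zero.1 h2).resolve_left two_ne_zero

lemma sum4_comm {A B C D M : Type*} [AddCommMonoid M] (s : Finset A) (t : Finset B)
    (u : Finset C) (v : Finset D) (f : A → B → C → D → M) :
    ∑ x ∈ s, ∑ y ∈ t, ∑ z ∈ u, ∑ w ∈ v, f x y z w
      = ∑ z ∈ u, ∑ w ∈ v, ∑ x ∈ s, ∑ y ∈ t, f x y z w := by
  calc ∑ x ∈ s, ∑ y ∈ t, ∑ z ∈ u, ∑ w ∈ v, f x y z w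
      = ∑ x ∈ s, ∑ z ∈ u, ∑ y ∈ t, ∑ w ∈ v, f x y z w :=
        Finset.sum_congr rfl fun x _ => Finset.sum_comm
    _ = ∑ z ∈ u, ∑ x ∈ s, ∑ y ∈ t, ∑ w ∈ v, f x y z w := Finset.sum_comm
    _ = ∑ z ∈ u, ∑ x ∈ s, ∑ w ∈ v, ∑ y ∈ t, f x y z w :=
        Finset.sum_congr rfl fun z _ => Finset.sum_congr rfl fun x _ => Finset.sum_comm
    _ = ∑ z ∈ u, ∑ w ∈ v, ∑ x ∈ s, ∑ y ∈ t, f x y z w :=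
        Finset.sum_congr rfl fun z _ => Finset.sum_comm

lemma eYYe :
    eOp F H n a * Yop F H n a * Yop F H n a * eOp F H n a
      = ((a.card : F) * (aᶜ.card : F)) • eOp F H n a
        + ((a.card : F) - (aᶜ.card : F)) • (eOp F H n a * Yop F H n a * eOp F H n a) := by
  have hsummand : ∀ i ∈ a, ∀ j ∈ aᶜ, ∀ i' ∈ a, ∀ j' ∈ aᶜ,
      eOp F H n a * permMap F H n (Equiv.swap i j) * permMap F H n (Equiv.swap i' j')
        * eOp F H n a
      = eOp F H n a * permMap F H n (Equiv.swap i j * Equiv.swap i' j') * eOp F H n a := by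
    intro i _ j _ i' _ j' _
    rw [permMap_mul, ← mul_assoc]
  have key : ∀ i ∈ a, ∀ j ∈ aᶜ,
      ∑ i' ∈ a, ∑ j' ∈ aᶜ,
        eOp F H n a * permMap F H n (Equiv.swap i j * Equiv.swap i' j') * eOp F H n a
      = eOp F H n a + ((a.card : F) - (aᶜ.card : F))
          • (eOp F H n a * permMap F H n (Equiv.swap i j) * eOp F H n a) := by
    intro i hi j hj
    rw [← Finset.add_sum_erase _ _ hi]
    have hinner1 : ∑ j' ∈ aᶜ,
        eOp F H n a * permMap F H n (Equiv.swap i j * Equiv.swap i j') * eOp F H n a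
        = eOp F H n a - ((aᶜ.card : F) - 1)
            • (eOp F H n a * permMap F H n (Equiv.swap i j) * eOp F H n a) := by
      rw [← Finset.add_sum_erase _ _ hj, term1 F H hi hj]
      have hz : ∑ j' ∈ aᶜ.erase j,
          eOp F H n a * permMap F H n (Equiv.swap i j * Equiv.swap i j') * eOp F H n a
          = ∑ _j' ∈ aᶜ.erase j,
            (-(eOp F H n a * permMap F H n (Equiv.swap i j) * eOp F H n a)) := by
        refine Finset.sum_congr rfl fun j' hj' => ?_
        exact term2 F H hi hj (Finset.mem_of_mem_erase hj') (Ne.symm (Finset.ne_of_mem_erase hj'))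
      rw [hz, Finset.sum_const, Finset.card_erase_of_mem hj, ← Nat.cast_smul_eq_nsmul F,
        Nat.cast_sub (Finset.card_pos.2 ⟨j, hj⟩), Nat.cast_one]
      module
    have hinner2 : ∀ i' ∈ a.erase i, ∑ j' ∈ aᶜ,
        eOp F H n a * permMap F H n (Equiv.swap i j * Equiv.swap i' j') * eOp F H n a
        = eOp F H n a * permMap F H n (Equiv.swap i j) * eOp F H n a := by
      intro i' hi'
      rw [← Finset.add_sum_erase _ _ hj,
        term3 F H hi (Finset.mem_of_mem_erase hi') hj (Ne.symm (Finset.ne_of_mem_erase hi'))]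
      have hz : ∑ j' ∈ aᶜ.erase j,
          eOp F H n a * permMap F H n (Equiv.swap i j * Equiv.swap i' j') * eOp F H n a
          = ∑ _j' ∈ aᶜ.erase j, (0 : Module.End F (TP F H n)) := by
        refine Finset.sum_congr rfl fun j' hj' => ?_
        exact term4 F H hi (Finset.mem_of_mem_erase hi') hj (Finset.mem_of_mem_erase hj')
          (Ne.symm (Finset.ne_of_mem_erase hi')) (Ne.symm (Finset.ne_of_mem_erase hj'))
      rw [hz, Finset.sum_const, nsmul_zero, add_zero]
    rw [hinner1, Finset.sum_congr rfl hinner2, Finset.sum_const, Finset.card_erase_of_mem hi,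
      ← Nat.cast_smul_eq_nsmul F, Nat.cast_sub (Finset.card_pos.2 ⟨i, hi⟩), Nat.cast_one]
    module
  calc eOp F H n a * Yop F H n a * Yop F H n a * eOp F H n a
      = ∑ i' ∈ a, ∑ j' ∈ aᶜ, ∑ i ∈ a, ∑ j ∈ aᶜ,
          eOp F H n a * permMap F H n (Equiv.swap i j) * permMap F H n (Equiv.swap i' j')
            * eOp F H n a := by
        simp only [Yop, Finset.mul_sum, Finset.sum_mul]
    _ = ∑ i ∈ a, ∑ j ∈ aᶜ, ∑ i' ∈ a, ∑ j' ∈ aᶜ,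
          eOp F H n a * permMap F H n (Equiv.swap i j) * permMap F H n (Equiv.swap i' j')
            * eOp F H n a :=
        sum4_comm a aᶜ a aᶜ _
    _ = ∑ i ∈ a, ∑ j ∈ aᶜ, ∑ i' ∈ a, ∑ j' ∈ aᶜ,
          eOp F H n a * permMap F H n (Equiv.swap i j * Equiv.swap i' j') * eOp F H n a := by
        refine Finset.sum_congr rfl fun i hi => Finset.sum_congr rfl fun j hj =>
          Finset.sum_congr rfl fun i' hi' => Finset.sum_congr rfl fun j' hj' => ?_
        exact hsummand i hi j hj i' hi' j' hj'
    _ = ∑ i ∈ a, ∑ j ∈ aᶜ, (eOp F H n a + ((a.card : F) - (aᶜ.card : F))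
          • (eOp F H n a * permMap F H n (Equiv.swap i j) * eOp F H n a)) := by
        refine Finset.sum_congr rfl fun i hi => Finset.sum_congr rfl fun j hj => ?_
        exact key i hi j hj
    _ = ((a.card : F) * (aᶜ.card : F)) • eOp F H n a
        + ((a.card : F) - (aᶜ.card : F)) • (eOp F H n a * Yop F H n a * eOp F H n a) := by
        have hEYE : eOp F H n a * Yop F H n a * eOp F H n a
            = ∑ i ∈ a, ∑ j ∈ aᶜ,
                eOp F H n a * permMap F H n (Equiv.swap i j) * eOp F H n a := by
          simp only [Yop, Finset.mul_sum, Finset.sum_mul]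
        rw [hEYE]
        simp only [Finset.sum_add_distrib, ← Finset.smul_sum]
        rw [Finset.sum_const, Finset.sum_const, ← Nat.cast_smul_eq_nsmul F (aᶜ.card),
          ← Nat.cast_smul_eq_nsmul F a.card, smul_smul]

end Main
section Annih

variable {n : ℕ} {a : Finset (Fin n)}

lemma End_sub_mul {X Y Z : Module.End F (TP F H n)} : (X - Y) * Z = X * Z - Y * Z :=
  sub_mul X Y Z

lemma End_mul_sub {X Y Z : Module.End F (TP F H n)} : X * (Y - Z) = X * Y - X * Z :=
  mul_sub X Y Z

lemma End_mul_add {X Y Z : Module.End F (TP F H n)} : X * (Y + Z) = X * Y + X * Z :=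
  mul_add X Y Z

lemma End_one_mul {X : Module.End F (TP F H n)} : (1 : Module.End F (TP F H n)) * X = X :=
  one_mul X

lemma Ystar :
    Yop F H n a * (Yop F H n a * eOp F H n a)
      = ((a.card : F) * (aᶜ.card : F)) • eOp F H n a
        + ((a.card : F) - (aᶜ.card : F)) • (Yop F H n a * eOp F H n a) := by
  have hEYE : eOp F H n a * Yop F H n a * eOp F H n a = Yop F H n a * eOp F H n a := by
    rw [← Yop_comm_eOp, mul_assoc, eOp_idem]
  calc Yop F H n a * (Yop F H n a * eOp F H n a)
      = Yop F H n a * (Yop F H n a * (eOp F H n a * eOp F H n a)) := by rw [eOp_idem]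
    _ = ((Yop F H n a * Yop F H n a) * eOp F H n a) * eOp F H n a := by
        rw [← mul_assoc, ← mul_assoc]
    _ = (Yop F H n a * (Yop F H n a * eOp F H n a)) * eOp F H n a := by
        rw [mul_assoc (Yop F H n a)]
    _ = (Yop F H n a * (eOp F H n a * Yop F H n a)) * eOp F H n a := by
        rw [Yop_comm_eOp]
    _ = ((Yop F H n a * eOp F H n a) * Yop F H n a) * eOp F H n a := by
        rw [← mul_assoc (Yop F H n a)]
    _ = eOp F H n a * Yop F H n a * Yop F H n a * eOp F H n a := by
        rw [Yop_comm_eOp]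
    _ = ((a.card : F) * (aᶜ.card : F)) • eOp F H n a
        + ((a.card : F) - (aᶜ.card : F)) • (eOp F H n a * Yop F H n a * eOp F H n a) :=
        eYYe F H
    _ = ((a.card : F) * (aᶜ.card : F)) • eOp F H n a
        + ((a.card : F) - (aᶜ.card : F)) • (Yop F H n a * eOp F H n a) := by
        rw [hEYE]

lemma CopE :
    Cop F H n * eOp F H n a
      = ((a.card : F) * (a.card : F) + 2 * (aᶜ.card : F) - (aᶜ.card : F) * (aᶜ.card : F))
          • eOp F H n a
        + (2 : F) • (Yop F H n a * eOp F H n a) := by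
  have hAA : ∀ i ∈ a, ∑ j ∈ a, permMap F H n (Equiv.swap i j) * eOp F H n a
      = (a.card : F) • eOp F H n a := by
    intro i hi
    calc ∑ j ∈ a, permMap F H n (Equiv.swap i j) * eOp F H n a
        = ∑ _j ∈ a, eOp F H n a :=
          Finset.sum_congr rfl fun j hj => permsOn_a_mul_eOp F H (swap_mem_permsOn hi hj)
      _ = a.card • eOp F H n a := Finset.sum_const _
      _ = (a.card : F) • eOp F H n a := (Nat.cast_smul_eq_nsmul F _ _).symm
  have hCC : ∀ j ∈ aᶜ, ∑ j' ∈ aᶜ, permMap F H n (Equiv.swap j j') * eOp F H n a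
      = ((2 : F) - (aᶜ.card : F)) • eOp F H n a := by
    intro j hj
    rw [← Finset.add_sum_erase _ _ hj]
    have hdiag : permMap F H n (Equiv.swap j j) * eOp F H n a = eOp F H n a := by
      have h1 : Equiv.swap j j = (1 : Equiv.Perm (Fin n)) := Equiv.swap_self j
      rw [h1, permMap_one, End_one_mul F H]
    have hoff : ∑ j' ∈ aᶜ.erase j, permMap F H n (Equiv.swap j j') * eOp F H n a
        = ∑ _j' ∈ aᶜ.erase j, (-eOp F H n a) := by
      refine Finset.sum_congr rfl fun j' hj' => ?_
      exact swap_c_mul_eOp F H hj (Finset.mem_of_mem_erase hj')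
        (Ne.symm (Finset.ne_of_mem_erase hj'))
    rw [hdiag, hoff, Finset.sum_const, Finset.card_erase_of_mem hj,
      ← Nat.cast_smul_eq_nsmul F, Nat.cast_sub (Finset.card_pos.2 ⟨j, hj⟩), Nat.cast_one]
    module
  have crossA : ∑ i ∈ a, ∑ j ∈ aᶜ, permMap F H n (Equiv.swap i j) * eOp F H n a
      = Yop F H n a * eOp F H n a := by
    simp only [Yop, Finset.sum_mul]
  have crossC : ∑ i ∈ aᶜ, ∑ j ∈ a, permMap F H n (Equiv.swap i j) * eOp F H n a
      = Yop F H n a * eOp F H n a := by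
    calc ∑ i ∈ aᶜ, ∑ j ∈ a, permMap F H n (Equiv.swap i j) * eOp F H n a
        = ∑ i ∈ aᶜ, ∑ j ∈ a, permMap F H n (Equiv.swap j i) * eOp F H n a := by
          refine Finset.sum_congr rfl fun i _ => Finset.sum_congr rfl fun j _ => ?_
          rw [Equiv.swap_comm]
      _ = ∑ j ∈ a, ∑ i ∈ aᶜ, permMap F H n (Equiv.swap j i) * eOp F H n a := Finset.sum_comm
      _ = Yop F H n a * eOp F H n a := by simp only [Yop, Finset.sum_mul]
  calc Cop F H n * eOp F H n a
      = ∑ i : Fin n, ∑ j : Fin n, permMap F H n (Equiv.swap i j) * eOp F H n a := by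
        simp only [Cop, Finset.sum_mul]
    _ = (∑ i ∈ a, ∑ j : Fin n, permMap F H n (Equiv.swap i j) * eOp F H n a)
        + ∑ i ∈ aᶜ, ∑ j : Fin n, permMap F H n (Equiv.swap i j) * eOp F H n a :=
        (Finset.sum_add_sum_compl a _).symm
    _ = (∑ i ∈ a, ((∑ j ∈ a, permMap F H n (Equiv.swap i j) * eOp F H n a)
          + ∑ j ∈ aᶜ, permMap F H n (Equiv.swap i j) * eOp F H n a))
        + ∑ i ∈ aᶜ, ((∑ j ∈ a, permMap F H n (Equiv.swap i j) * eOp F H n a)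
          + ∑ j ∈ aᶜ, permMap F H n (Equiv.swap i j) * eOp F H n a) := by
        congr 1 <;> exact Finset.sum_congr rfl fun i _ => (Finset.sum_add_sum_compl a _).symm
    _ = ((∑ i ∈ a, ∑ j ∈ a, permMap F H n (Equiv.swap i j) * eOp F H n a)
          + ∑ i ∈ a, ∑ j ∈ aᶜ, permMap F H n (Equiv.swap i j) * eOp F H n a)
        + ((∑ i ∈ aᶜ, ∑ j ∈ a, permMap F H n (Equiv.swap i j) * eOp F H n a)
          + ∑ i ∈ aᶜ, ∑ j ∈ aᶜ, permMap F H n (Equiv.swap i j) * eOp F H n a) := by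
        rw [Finset.sum_add_distrib, Finset.sum_add_distrib]
    _ = (((a.card : F) * (a.card : F)) • eOp F H n a + Yop F H n a * eOp F H n a)
        + (Yop F H n a * eOp F H n a
          + ((aᶜ.card : F) * ((2 : F) - (aᶜ.card : F))) • eOp F H n a) := by
        rw [crossA, crossC, Finset.sum_congr rfl hAA, Finset.sum_congr rfl hCC,
          Finset.sum_const, Finset.sum_const, ← Nat.cast_smul_eq_nsmul F a.card,
          ← Nat.cast_smul_eq_nsmul F aᶜ.card, smul_smul, smul_smul]
    _ = ((a.card : F) * (a.card : F) + 2 * (aᶜ.card : F) - (aᶜ.card : F) * (aᶜ.card : F))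
          • eOp F H n a
        + (2 : F) • (Yop F H n a * eOp F H n a) := by
        module

lemma annih :
    (Cop F H n - (((a.card : F) + 1) ^ 2 - ((aᶜ.card : F) - 1) ^ 2) • 1)
      * ((Cop F H n - ((a.card : F) ^ 2 - (aᶜ.card : F) ^ 2) • 1) * eOp F H n a) = 0 := by
  set M := (a.card : F) with hM
  set R := (aᶜ.card : F) with hR
  have hTE : Cop F H n * eOp F H n a
      = (M * M + 2 * R - R * R) • eOp F H n a + (2 : F) • (Yop F H n a * eOp F H n a) :=
    CopE F H
  have hYY : Yop F H n a * (Yop F H n a * eOp F H n a)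
      = (M * R) • eOp F H n a + (M - R) • (Yop F H n a * eOp F H n a) := Ystar F H
  have hTY : Cop F H n * (Yop F H n a * eOp F H n a)
      = (2 * (M * R)) • eOp F H n a
        + ((M * M + 2 * R - R * R) + 2 * (M - R)) • (Yop F H n a * eOp F H n a) := by
    calc Cop F H n * (Yop F H n a * eOp F H n a)
        = (Cop F H n * Yop F H n a) * eOp F H n a := (mul_assoc _ _ _).symm
      _ = (Yop F H n a * Cop F H n) * eOp F H n a := by rw [Cop_comm_Yop]
      _ = Yop F H n a * (Cop F H n * eOp F H n a) := mul_assoc _ _ _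
      _ = Yop F H n a * ((M * M + 2 * R - R * R) • eOp F H n a
            + (2 : F) • (Yop F H n a * eOp F H n a)) := by rw [hTE]
      _ = (M * M + 2 * R - R * R) • (Yop F H n a * eOp F H n a)
          + (2 : F) • (Yop F H n a * (Yop F H n a * eOp F H n a)) := by
          rw [End_mul_add F H, End_mul_smul F H, End_mul_smul F H]
      _ = (M * M + 2 * R - R * R) • (Yop F H n a * eOp F H n a)
          + (2 : F) • ((M * R) • eOp F H n a + (M - R) • (Yop F H n a * eOp F H n a)) := by
          rw [hYY]
      _ = (2 * (M * R)) • eOp F H n a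
          + ((M * M + 2 * R - R * R) + 2 * (M - R)) • (Yop F H n a * eOp F H n a) := by
          module
  have hW : (Cop F H n - (M ^ 2 - R ^ 2) • 1) * eOp F H n a
      = ((M * M + 2 * R - R * R) - (M ^ 2 - R ^ 2)) • eOp F H n a
        + (2 : F) • (Yop F H n a * eOp F H n a) := by
    rw [End_sub_mul F H, End_smul_mul F H, End_one_mul F H, hTE]
    module
  rw [hW, End_mul_add F H, End_mul_smul F H, End_mul_smul F H, End_sub_mul F H,
    End_smul_mul F H, End_one_mul F H, End_sub_mul F H, End_smul_mul F H, End_one_mul F H,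
    hTE, hTY]
  module

end Annih
section Final

variable {n : ℕ}

lemma Hgen_le_ker (a : Finset (Fin n)) :
    Hgen F H n a ≤ LinearMap.ker
      ((Cop F H n - (((a.card : F) + 1) ^ 2 - ((aᶜ.card : F) - 1) ^ 2) • 1)
        * (Cop F H n - ((a.card : F) ^ 2 - (aᶜ.card : F) ^ 2) • 1)) := by
  rw [Hgen, LinearMap.range_le_ker_iff]
  have heq : (symOn F H n a ∘ₗ altOn F H n aᶜ) = eOp F H n a := rfl
  rw [heq, ← Module.End.mul_eq_comp, mul_assoc]
  exact annih F H

lemma HmixSpan_le_ker {m : ℕ} (hm : m ≤ n) :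
    HmixSpan F H n m ≤ LinearMap.ker
      ((Cop F H n - (((m : F) + 1) ^ 2 - (((n : F) - (m : F)) - 1) ^ 2) • 1)
        * (Cop F H n - ((m : F) ^ 2 - ((n : F) - (m : F)) ^ 2) • 1)) := by
  rw [HmixSpan]
  refine iSup₂_le fun a ha => ?_
  have hca : a.card = m := ha
  have hcc : ((aᶜ.card : ℕ) : F) = (n : F) - (m : F) := by
    rw [Finset.card_compl, Fintype.card_fin, Nat.cast_sub (hca ▸ hm), hca]
  have h := Hgen_le_ker F H a
  rw [hcc, hca] at h
  exact h

end Final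

theorem HmixSpan_inter_eq_bot' (k q : ℕ) (hk : 1 ≤ k) (hq : 1 ≤ q) :
    HmixSpan F H (k + q) (k + 1) ⊓ HmixSpan F H (k + q) (k - 1) = ⊥ := by
  rw [eq_bot_iff]
  intro v hv
  rw [Submodule.mem_inf] at hv
  rw [Submodule.mem_bot]
  have hsumne : ((k : F) + (q : F)) ≠ 0 := by
    have h0 : ((k + q : ℕ) : F) ≠ 0 := Nat.cast_ne_zero.2 (by omega)
    push_cast at h0
    exact h0
  have h1 := HmixSpan_le_ker F H (n := k + q) (m := k + 1) (by omega) hv.1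
  have h2 := HmixSpan_le_ker F H (n := k + q) (m := k - 1) (by omega) hv.2
  rw [LinearMap.mem_ker] at h1 h2
  push_cast at h1
  push_cast [Nat.cast_sub hk] at h2
  simp only [Module.End.mul_apply, LinearMap.sub_apply, LinearMap.smul_apply,
    Module.End.one_apply, map_sub, map_smul] at h1 h2
  set A := Cop F H (k + q) with hA
  -- the four eigenvalue candidates
  set X₁ : F := ((k : F) + 2) ^ 2 - ((q : F) - 2) ^ 2 with hX₁
  set Y₁ : F := ((k : F) + 1) ^ 2 - ((q : F) - 1) ^ 2 with hY₁
  set X₂ : F := (k : F) ^ 2 - (q : F) ^ 2 with hX₂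
  set Y₂ : F := ((k : F) - 1) ^ 2 - ((q : F) + 1) ^ 2 with hY₂
  have key : ((8 : F) * ((k : F) + (q : F))) • (A v) = (X₁ * Y₁ - X₂ * Y₂) • v := by
    linear_combination (norm := module) h2 - h1
  have hcne : ((8 : F) * ((k : F) + (q : F))) ≠ 0 :=
    mul_ne_zero (by norm_num) hsumne
  set c : F := (8 : F) * ((k : F) + (q : F)) with hc
  set L : F := c⁻¹ * (X₁ * Y₁ - X₂ * Y₂) with hL
  have hu : A v = L • v := by
    calc A v = (c⁻¹ * c) • A v := by rw [inv_mul_cancel₀ hcne, one_smul]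
      _ = c⁻¹ • (c • A v) := mul_smul _ _ _
      _ = c⁻¹ • ((X₁ * Y₁ - X₂ * Y₂) • v) := by rw [key]
      _ = L • v := (mul_smul _ _ _).symm
  have hAAv : A (A v) = (L * L) • v := by
    calc A (A v) = A (L • v) := by rw [hu]
      _ = L • A v := map_smul _ _ _
      _ = L • (L • v) := by rw [hu]
      _ = (L * L) • v := smul_smul _ _ _
  rw [hAAv, hu] at h1 h2
  have f1 : ((L - X₁) * (L - Y₁)) • v = 0 := by
    linear_combination (norm := module) h1
  have f2 : ((L - X₂) * (L - Y₂)) • v = 0 := by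
    linear_combination (norm := module) h2
  rcases smul_eq_zero.1 f1 with hs1 | hv0
  · rcases smul_eq_zero.1 f2 with hs2 | hv0
    · exfalso
      rcases mul_eq_zero.1 hs1 with hL1 | hL1 <;>
        rcases mul_eq_zero.1 hs2 with hL2 | hL2 <;>
        [skip; skip; skip; skip] <;>
        (try (have hXY : X₁ = X₂ := by
                have e1 := sub_eq_zero.1 hL1
                have e2 := sub_eq_zero.1 hL2
                rw [← e1, ← e2]))
      · have e1 := sub_eq_zero.1 hL1
        have e2 := sub_eq_zero.1 hL2
        have hz : (4 : F) * ((k : F) + (q : F)) = 0 := by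
          have : X₁ = X₂ := by rw [← e1, ← e2]
          rw [hX₁, hX₂] at this
          linear_combination this
        exact mul_ne_zero (by norm_num) hsumne hz
      · have e1 := sub_eq_zero.1 hL1
        have e2 := sub_eq_zero.1 hL2
        have hz : (6 : F) * ((k : F) + (q : F)) = 0 := by
          have : X₁ = Y₂ := by rw [← e1, ← e2]
          rw [hX₁, hY₂] at this
          linear_combination this
        exact mul_ne_zero (by norm_num) hsumne hz
      · have e1 := sub_eq_zero.1 hL1
        have e2 := sub_eq_zero.1 hL2
        have hz : (2 : F) * ((k : F) + (q : F)) = 0 := by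
          have : Y₁ = X₂ := by rw [← e1, ← e2]
          rw [hY₁, hX₂] at this
          linear_combination this
        exact mul_ne_zero (by norm_num) hsumne hz
      · have e1 := sub_eq_zero.1 hL1
        have e2 := sub_eq_zero.1 hL2
        have hz : (4 : F) * ((k : F) + (q : F)) = 0 := by
          have : Y₁ = Y₂ := by rw [← e1, ← e2]
          rw [hY₁, hY₂] at this
          linear_combination this
        exact mul_ne_zero (by norm_num) hsumne hz
    · exact hv0
  · exact hv0


/-- for `k ≥ 1`, `q ≥ 1` with `n = k + q`, the subspaces
`H^{⊙[k+1],∧[q-1]}` and `H^{⊙[k-1],∧[q+1]}` of `H^{⊗n}` have trivial intersection. -/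
theorem HmixSpan_inter_eq_bot (k q : ℕ) (hk : 1 ≤ k) (hq : 1 ≤ q) :
    HmixSpan F H (k + q) (k + 1) ⊓ HmixSpan F H (k + q) (k - 1) = ⊥ := by
  exact HmixSpan_inter_eq_bot' F H k q hk hq

end
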